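/- Let t_1 ≤ t_2 be positive reals with t_1/(t_1+t_2) < 1/4, and let q satisfy 1 − √(t_1/(t_1+t_2)) < q < (1/2)(√(1 − 4t_1/(t_1+t_2)) + 1). Set r = 1 − q. Then there is no 0-1 sequence (γ_k)_{k≥1} satisfying simultaneously q·∑_{k=1}^∞ γ_k r^{k-1} = t_1/(t_1+t_2) and q·∑_{k=1}^∞ (1−γ_k) r^{k-1} = t_2/(t_1+t_2). -/

import Mathlib

set_option maxHeartbeats 1000000 in
/-- Non-existence of an optimal pure strategy for two boxes: if
`t₁/(t₁+t₂) < 1/4` and `1 − √(t₁/(t₁+t₂)) < q < (1 + √(1 − 4 t₁/(t₁+t₂)))/2`,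
then no 0-1 sequence `γ` satisfies both
`q ∑_k γ_k r^(k-1) = t₁/(t₁+t₂)` and `q ∑_k (1−γ_k) r^(k-1) = t₂/(t₁+t₂)`. -/
theorem no_equalizing_sequence (t₁ t₂ : ℝ) (ht₁ : 0 < t₁) (h12 : t₁ ≤ t₂)
    (ha : t₁ / (t₁ + t₂) < 1 / 4) (q : ℝ)
    (hq1 : 1 - Real.sqrt (t₁ / (t₁ + t₂)) < q)
    (hq2 : q < (1 / 2) * (Real.sqrt (1 - 4 * t₁ / (t₁ + t₂)) + 1))
    (r : ℝ) (hr : r = 1 - q) :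
    ¬ ∃ γ : ℕ → ℝ, (∀ k, γ k = 0 ∨ γ k = 1) ∧
        q * (∑' k : ℕ, γ k * r ^ k) = t₁ / (t₁ + t₂) ∧
        q * (∑' k : ℕ, (1 - γ k) * r ^ k) = t₂ / (t₁ + t₂) := by
  rintro ⟨γ, hγ, h1, h2⟩
  have hT : 0 < t₁ + t₂ := by linarith
  set a := t₁ / (t₁ + t₂) with ha_def
  have ha0 : 0 < a := div_pos ht₁ hT
  have hsa_sq : Real.sqrt a ^ 2 = a := Real.sq_sqrt ha0.le
  have hsa_nn : 0 ≤ Real.sqrt a := Real.sqrt_nonneg a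
  have hsa : Real.sqrt a < 1 / 2 := by
    have h := Real.sqrt_lt_sqrt ha0.le ha
    have : Real.sqrt (1 / 4 : ℝ) = 1 / 2 := by
      rw [show (1 / 4 : ℝ) = (1 / 2) ^ 2 by norm_num, Real.sqrt_sq (by norm_num)]
    linarith [this ▸ h]
  have hqhalf : 1 / 2 < q := by linarith
  have h4a : 4 * t₁ / (t₁ + t₂) = 4 * a := by rw [ha_def, mul_div_assoc]
  rw [h4a] at hq2
  have hs4_nn : 0 ≤ Real.sqrt (1 - 4 * a) := Real.sqrt_nonneg _
  have hs4_sq : Real.sqrt (1 - 4 * a) ^ 2 = 1 - 4 * a :=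
    Real.sq_sqrt (by linarith)
  have hs4_pos : 0 < Real.sqrt (1 - 4 * a) := Real.sqrt_pos.mpr (by linarith)
  have hq1' : q < 1 := by nlinarith
  have hr0 : 0 < r := by rw [hr]; linarith
  have hr1 : r < 1 := by rw [hr]; linarith
  have hγ01 : ∀ k, 0 ≤ γ k ∧ γ k ≤ 1 := by
    intro k; rcases hγ k with h | h <;> rw [h] <;> norm_num
  have hgeo : Summable (fun k : ℕ => r ^ k) :=
    summable_geometric_of_lt_one hr0.le hr1
  have hs1 : Summable (fun k : ℕ => γ k * r ^ k) := by
    refine Summable.of_nonneg_of_le (fun k => ?_) (fun k => ?_) hgeo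
    · exact mul_nonneg (hγ01 k).1 (pow_nonneg hr0.le k)
    · nlinarith [(hγ01 k).2, pow_nonneg hr0.le k]
  have hs2 : Summable (fun k : ℕ => (1 - γ k) * r ^ k) := by
    refine Summable.of_nonneg_of_le (fun k => ?_) (fun k => ?_) hgeo
    · exact mul_nonneg (by linarith [(hγ01 k).2]) (pow_nonneg hr0.le k)
    · nlinarith [(hγ01 k).1, pow_nonneg hr0.le k]
  have h2' : q * (∑' k : ℕ, (1 - γ k) * r ^ k) = 1 - a := by
    rw [h2, ha_def]; field_simp; ring
  have hnn1 : ∀ k : ℕ, 0 ≤ γ k * r ^ k :=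
    fun k => mul_nonneg (hγ01 k).1 (pow_nonneg hr0.le k)
  have hnn2 : ∀ k : ℕ, 0 ≤ (1 - γ k) * r ^ k :=
    fun k => mul_nonneg (by linarith [(hγ01 k).2]) (pow_nonneg hr0.le k)
  have hq0 : 0 < q := by linarith
  rcases hγ 0 with hγ0 | hγ0
  · -- γ 0 = 0
    rcases hγ 1 with hγ1 | hγ1
    · -- γ 1 = 0 : second sum ≥ 1 + r, so 1 - a ≥ q(1+r) = q(2-q), contradiction
      have hle : (1 : ℝ) + r ≤ ∑' k : ℕ, (1 - γ k) * r ^ k := by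
        have := Summable.sum_le_tsum ({0, 1} : Finset ℕ) (fun k _ => hnn2 k) hs2
        simpa [hγ0, hγ1] using this
      have : q * (1 + r) ≤ 1 - a := by
        calc q * (1 + r) ≤ q * (∑' k : ℕ, (1 - γ k) * r ^ k) :=
              by exact mul_le_mul_of_nonneg_left hle hq0.le
          _ = 1 - a := h2'
      -- but (1-q)^2 < a since 1 - q = r < √a
      have hrsa : r < Real.sqrt a := by rw [hr]; linarith
      nlinarith
    · -- γ 1 = 1 : first sum ≥ r, so a ≥ q r = q(1-q), contradiction
      have hle : r ≤ ∑' k : ℕ, γ k * r ^ k := by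
        have := Summable.le_tsum hs1 1 (fun j _ => hnn1 j)
        simpa [hγ1] using this
      have : q * r ≤ a := by
        calc q * r ≤ q * (∑' k : ℕ, γ k * r ^ k) :=
              mul_le_mul_of_nonneg_left hle hq0.le
          _ = a := h1
      rw [hr] at this
      have hlt : (2 * q - 1) ^ 2 < Real.sqrt (1 - 4 * a) ^ 2 := by nlinarith
      nlinarith [hlt, hs4_sq, this]
  · -- γ 0 = 1 : first sum ≥ 1, so a ≥ q, contradiction
    have hle : (1 : ℝ) ≤ ∑' k : ℕ, γ k * r ^ k := by
      have := Summable.le_tsum hs1 0 (fun j _ => hnn1 j)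
      simpa [hγ0] using this
    have : q ≤ a := by
      calc q = q * 1 := (mul_one q).symm
        _ ≤ q * (∑' k : ℕ, γ k * r ^ k) := mul_le_mul_of_nonneg_left hle hq0.le
        _ = a := h1
    linarith
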